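/- arXiv:2602.03911 — 3 statements merged into one kernel-verified Lean document; each statement's English description precedes it below -/
import Mathlib

section
/- Let ξ ∈ (0,1], s = 2/ξ, and α_k = 2/(ξ(k+s)). Suppose (e_k) is a sequence of nonnegative reals with e_{k+1} ≤ (1 − ξ α_k) e_k + α_k² c for some c ≥ 0. Then for all k ≥ 1, e_k ≤ Γ/(k+s), where Γ = (s+1)·max(e_0, 4c/(s ξ²)). -/
theorem inner_loop_rate
    (ξ : ℝ) (hξ0 : 0 < ξ) (hξ1 : ξ ≤ 1)
    (c : ℝ) (hc : 0 ≤ c)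
    (e : ℕ → ℝ) (he : ∀ k, 0 ≤ e k)
    (hrec : ∀ k : ℕ,
      e (k + 1) ≤ (1 - ξ * (2 / (ξ * (k + 2 / ξ)))) * e k
        + (2 / (ξ * (k + 2 / ξ))) ^ 2 * c) :
    ∀ k : ℕ, 1 ≤ k →
      e k ≤ (2 / ξ + 1) * max (e 0) (4 * c / ((2 / ξ) * ξ ^ 2)) / (k + 2 / ξ) := by
  have hξ : ξ ≠ 0 := ne_of_gt hξ0
  set s : ℝ := 2 / ξ with hs
  have hs2 : (2:ℝ) ≤ s := by
    rw [hs, le_div_iff₀ hξ0]; linarith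
  set M : ℝ := max (e 0) (4 * c / ((2 / ξ) * ξ ^ 2)) with hM
  have hMe0 : e 0 ≤ M := le_max_left _ _
  have hM0 : 0 ≤ M := le_trans (he 0) hMe0
  set Γ : ℝ := (s + 1) * M with hΓ
  have hΓ0 : 0 ≤ Γ := by
    apply mul_nonneg _ hM0; linarith
  set D : ℝ := 4 * c / ξ ^ 2 with hD
  have hD0 : 0 ≤ D := by positivity
  have hDM : D ≤ Γ := by
    have h1 : 4 * c / ((2 / ξ) * ξ ^ 2) ≤ M := le_max_right _ _
    have h2 : (2 / ξ) * ξ ^ 2 = 2 * ξ := by field_simp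
    rw [h2] at h1
    have h3 : 4 * c / (2 * ξ) = 2 * c / ξ := by
      rw [div_eq_div_iff (by positivity) hξ0.ne']; ring
    rw [h3] at h1
    -- Γ = (2/ξ+1) M ≥ (2/ξ+1)(2c/ξ) = 4c/ξ² + 2c/ξ ≥ D
    have h4 : (s + 1) * (2 * c / ξ) ≤ Γ := by
      rw [hΓ]
      apply mul_le_mul_of_nonneg_left h1 (by linarith)
    refine le_trans ?_ h4
    rw [hs, hD]
    rw [div_add' _ _ _ hξ, div_mul_div_comm]
    rw [div_le_div_iff₀ (by positivity) (by positivity)]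
    have : 0 ≤ c * ξ := mul_nonneg hc hξ0.le
    nlinarith [sq_nonneg ξ]
  -- main induction
  have main : ∀ k : ℕ, e k ≤ Γ / (k + s) := by
    intro k
    induction k with
    | zero =>
      simp only [Nat.cast_zero, zero_add]
      rw [le_div_iff₀ (by linarith)]
      nlinarith
    | succ k ih =>
      have hk0 : (0:ℝ) ≤ (k:ℝ) := Nat.cast_nonneg k
      set t : ℝ := (k:ℝ) + s with hts
      have ht2 : (2:ℝ) ≤ t := by rw [hts]; linarith
      have ht0 : (0:ℝ) < t := by linarith
      have hrec' := hrec k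
      rw [← hts] at hrec'
      have h1 : ξ * (2 / (ξ * t)) = 2 / t := by
        field_simp
      have h2 : (2 / (ξ * t)) ^ 2 * c = D / t ^ 2 := by
        rw [hD]; field_simp; ring
      rw [h1, h2] at hrec'
      have hnn : 0 ≤ 1 - 2 / t := by
        rw [sub_nonneg, div_le_one ht0]; linarith
      have hgoal : ((k:ℕ) + 1 : ℕ) + (s:ℝ) = t + 1 := by
        push_cast; rw [hts]; ring
      rw [hgoal]
      calc e (k + 1) ≤ (1 - 2 / t) * e k + D / t ^ 2 := hrec'
        _ ≤ (1 - 2 / t) * (Γ / t) + D / t ^ 2 :=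
            add_le_add (mul_le_mul_of_nonneg_left ih hnn) le_rfl
        _ = ((t - 2) * Γ + D) / t ^ 2 := by field_simp
        _ ≤ Γ / (t + 1) := by
            rw [div_le_div_iff₀ (by positivity) (by linarith)]
            nlinarith
  exact fun k _ => main k
end

section
/- Among all real sequences (K_j)_{j=0}^{N−1} with K_j > 0 satisfying the constraint ∑_{j=0}^{N−1} μ^{N−1−j} √(c₂/K_j) ≤ ε/2, the geometrically increasing schedule K_j = C μ^{(2/3)(N−1−j)} with C = (4c₂/ε²)((1−μ^{(2/3)N})/(1−μ^{2/3}))² minimizes the total cost ∑_{j=0}^{N−1} K_j. -/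
open Finset Real

lemma amgm_aux (x k : ℝ) (hx : 0 < x) (hk : 0 ≤ k) :
    3 * k ≤ x + 2 * (k * Real.sqrt k) / Real.sqrt x := by
  set u := Real.sqrt x with hu'
  set t := Real.sqrt k with ht'
  have hu : 0 < u := Real.sqrt_pos.mpr hx
  have ht : 0 ≤ t := Real.sqrt_nonneg k
  have hx' : x = u ^ 2 := (Real.sq_sqrt hx.le).symm
  have hk' : k = t ^ 2 := (Real.sq_sqrt hk).symm
  have key : 0 ≤ (u - t) ^ 2 * (u + 2 * t) :=
    mul_nonneg (sq_nonneg _) (by linarith)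
  rw [hx', hk', ← sub_nonneg]
  have heq : u ^ 2 + 2 * (t ^ 2 * t) / u - 3 * t ^ 2 = ((u - t) ^ 2 * (u + 2 * t)) / u := by
    field_simp
    ring
  rw [heq]
  exact div_nonneg key hu.le

theorem geometric_TUF_optimal
    (μ : ℝ) (hμ0 : 0 < μ) (hμ1 : μ < 1)
    (N : ℕ) (c₂ ε : ℝ) (hc₂ : 0 < c₂) (hε : 0 < ε) :
    (∑ j ∈ Finset.range N,
        μ ^ (N - 1 - j) *
          Real.sqrt (c₂ /
            ((4 * c₂ / ε ^ 2) * ((1 - μ ^ ((2 / 3 : ℝ) * N)) / (1 - μ ^ ((2 : ℝ) / 3))) ^ 2 *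
              μ ^ ((2 / 3 : ℝ) * ((N - 1 - j : ℕ) : ℝ))))
      ≤ ε / 2) ∧
    ∀ K : ℕ → ℝ, (∀ j < N, 0 < K j) →
      (∑ j ∈ Finset.range N, μ ^ (N - 1 - j) * Real.sqrt (c₂ / K j) ≤ ε / 2) →
      ∑ j ∈ Finset.range N,
          (4 * c₂ / ε ^ 2) * ((1 - μ ^ ((2 / 3 : ℝ) * N)) / (1 - μ ^ ((2 : ℝ) / 3))) ^ 2 *
            μ ^ ((2 / 3 : ℝ) * ((N - 1 - j : ℕ) : ℝ))
        ≤ ∑ j ∈ Finset.range N, K j := by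
  rcases Nat.eq_zero_or_pos N with hN | hN
  · subst hN
    refine ⟨by simpa using (by positivity : (0:ℝ) ≤ ε / 2), ?_⟩
    intro K _ _
    simp
  -- setup
  have hμ0' := hμ0.le
  set r : ℝ := μ ^ ((2 : ℝ) / 3) with hrdef
  have hr0 : 0 < r := rpow_pos_of_pos hμ0 _
  have hr1 : r < 1 := rpow_lt_one hμ0' hμ1 (by norm_num)
  set s : ℝ := μ ^ ((1 : ℝ) / 3) with hsdef
  have hs0 : 0 < s := rpow_pos_of_pos hμ0 _
  have hs2 : s ^ 2 = r := by
    rw [hsdef, hrdef, ← Real.rpow_natCast (μ ^ ((1:ℝ)/3)) 2, ← Real.rpow_mul hμ0']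
    norm_num
  have hs3 : s ^ 3 = μ := by
    rw [hsdef, ← Real.rpow_natCast (μ ^ ((1:ℝ)/3)) 3, ← Real.rpow_mul hμ0']
    norm_num
  have hrm : ∀ m : ℕ, μ ^ ((2 / 3 : ℝ) * (m : ℝ)) = r ^ m := by
    intro m
    rw [hrdef, ← Real.rpow_natCast (μ ^ ((2:ℝ)/3)) m, ← Real.rpow_mul hμ0']
  simp only [hrm]
  set S : ℝ := ∑ i ∈ Finset.range N, r ^ i with hSdef
  have hS0 : 0 < S :=
    Finset.sum_pos (fun i _ => pow_pos hr0 i) (Finset.nonempty_range_iff.mpr hN.ne')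
  have hES : (1 - r ^ N) / (1 - r) = S := by
    rw [hSdef, geom_sum_eq hr1.ne]
    have h1 : (1:ℝ) - r ≠ 0 := by linarith
    have h2 : r - 1 ≠ 0 := by linarith
    field_simp
    ring
  rw [hES]
  set C : ℝ := 4 * c₂ / ε ^ 2 * S ^ 2 with hCdef
  have hC0 : 0 < C := by positivity
  have hsqC : Real.sqrt C = 2 * Real.sqrt c₂ * S / ε := by
    have h : C = (2 * Real.sqrt c₂ * S / ε) ^ 2 := by
      rw [hCdef, div_pow, mul_pow, mul_pow, Real.sq_sqrt hc₂.le]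
      ring
    rw [h, Real.sqrt_sq (by positivity)]
  have hsqc₂ : (0:ℝ) < Real.sqrt c₂ := Real.sqrt_pos.mpr hc₂
  clear_value s r S C
  -- square-root computations
  have hsqrt_rm : ∀ m : ℕ, Real.sqrt (r ^ m) = s ^ m := by
    intro m
    have : r ^ m = (s ^ m) ^ 2 := by rw [← hs2]; ring
    rw [this, Real.sqrt_sq (by positivity)]
  have hsqrtK : ∀ m : ℕ, Real.sqrt (C * r ^ m) = Real.sqrt C * s ^ m := by
    intro m
    rw [Real.sqrt_mul hC0.le, hsqrt_rm]
  have hμm : ∀ m : ℕ, μ ^ m = s ^ m * r ^ m := by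
    intro m
    rw [← hs3, ← hs2]
    ring
  constructor
  · -- Part 1: constraint holds (with equality)
    have hterm : ∀ j ∈ Finset.range N,
        μ ^ (N - 1 - j) * Real.sqrt (c₂ / (C * r ^ (N - 1 - j)))
          = Real.sqrt c₂ / Real.sqrt C * r ^ (N - 1 - j) := by
      intro j _
      set m := N - 1 - j
      rw [Real.sqrt_div hc₂.le, hsqrtK, hμm]
      have hsm : s ^ m ≠ 0 := by positivity
      have hsc : Real.sqrt C ≠ 0 := by positivity
      field_simp
    rw [Finset.sum_congr rfl hterm, ← Finset.mul_sum,
        Finset.sum_range_reflect (fun i => r ^ i) N, ← hSdef, hsqC]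
    have : Real.sqrt c₂ / (2 * Real.sqrt c₂ * S / ε) * S = ε / 2 := by
      field_simp
    rw [this]
  · -- Part 2: optimality
    intro K hKpos hKcon
    have hbound : ∀ j ∈ Finset.range N,
        3 * (C * r ^ (N - 1 - j)) ≤
          K j + 2 * (C * Real.sqrt C / Real.sqrt c₂) *
            (μ ^ (N - 1 - j) * Real.sqrt (c₂ / K j)) := by
      intro j hj
      have hKj := hKpos j (Finset.mem_range.mp hj)
      set m := N - 1 - j
      have h1 := amgm_aux (K j) (C * r ^ m) hKj (by positivity)
      have h2 : 2 * (C * r ^ m * Real.sqrt (C * r ^ m)) / Real.sqrt (K j)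
          = 2 * (C * Real.sqrt C / Real.sqrt c₂) * (μ ^ m * Real.sqrt (c₂ / K j)) := by
        rw [hsqrtK, Real.sqrt_div hc₂.le, hμm]
        have hsK : Real.sqrt (K j) ≠ 0 := by positivity
        field_simp
      linarith [h1, h2.le, h2.ge]
    have hsum := Finset.sum_le_sum hbound
    have hgeo : ∑ j ∈ Finset.range N, C * r ^ (N - 1 - j) = C * S := by
      rw [← Finset.mul_sum, Finset.sum_range_reflect (fun i => r ^ i) N, ← hSdef]
    have e1 : ∑ i ∈ Finset.range N, 3 * (C * r ^ (N - 1 - i)) = 3 * (C * S) := by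
      rw [← hgeo, Finset.mul_sum]
    have e2 : ∑ x ∈ Finset.range N, 2 * (C * Real.sqrt C / Real.sqrt c₂) *
        (μ ^ (N - 1 - x) * Real.sqrt (c₂ / K x))
        = 2 * (C * Real.sqrt C / Real.sqrt c₂) *
          ∑ x ∈ Finset.range N, μ ^ (N - 1 - x) * Real.sqrt (c₂ / K x) :=
      (Finset.mul_sum _ _ _).symm
    rw [Finset.sum_add_distrib, e1, e2] at hsum
    rw [hgeo]
    have hcc : 2 * (C * Real.sqrt C / Real.sqrt c₂) * (ε / 2) = 2 * (C * S) := by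
      rw [hsqC]
      field_simp
    have hmul : 2 * (C * Real.sqrt C / Real.sqrt c₂) *
        (∑ j ∈ Finset.range N, μ ^ (N - 1 - j) * Real.sqrt (c₂ / K j))
        ≤ 2 * (C * Real.sqrt C / Real.sqrt c₂) * (ε / 2) :=
      mul_le_mul_of_nonneg_left hKcon (by positivity)
    rw [hcc] at hmul
    linarith
end

section
/- (Deterministic Robbins–Siegmund) Let (Z_k), (A_k), (B_k), (D_k) be sequences of nonnegative reals with ∑ A_k < ∞, ∑ B_k < ∞, ∑ D_k = ∞, D_k ≤ 1 for all k, and Z_{k+1} ≤ Z_k(1 + A_k − D_k) + B_k. Then Z_k → 0 as k → ∞. -/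
open Filter Finset

theorem deterministic_robbins_siegmund
    (Z A B D : ℕ → ℝ)
    (hZ : ∀ k, 0 ≤ Z k) (hA : ∀ k, 0 ≤ A k) (hB : ∀ k, 0 ≤ B k)
    (hD0 : ∀ k, 0 ≤ D k) (hD1 : ∀ k, D k ≤ 1)
    (hAsum : Summable A) (hBsum : Summable B)
    (hDsum : Filter.Tendsto (fun n => ∑ k ∈ Finset.range n, D k) Filter.atTop Filter.atTop)
    (hrec : ∀ k, Z (k + 1) ≤ Z k * (1 + A k - D k) + B k) :
    Filter.Tendsto Z Filter.atTop (nhds 0) := by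
  set S := ∑' k, A k with hSdef
  set T := ∑' k, B k with hTdef
  have hS0 : (0:ℝ) ≤ S := tsum_nonneg hA
  have hT0 : (0:ℝ) ≤ T := tsum_nonneg hB
  have hpartA : ∀ n : ℕ, ∑ k ∈ Finset.range n, A k ≤ S :=
    fun n => Summable.sum_le_tsum _ (fun i _ => hA i) hAsum
  have hpartB : ∀ n : ℕ, ∑ k ∈ Finset.range n, B k ≤ T :=
    fun n => Summable.sum_le_tsum _ (fun i _ => hB i) hBsum
  set M := (Z 0 + T) * Real.exp S with hMdef
  have hM0 : 0 ≤ M := mul_nonneg (by linarith [hZ 0]) (Real.exp_pos S).le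
  -- Step 1: uniform bound Z n ≤ M
  have hkey : ∀ n : ℕ, Z n ≤ (Z 0 + ∑ k ∈ Finset.range n, B k) *
      Real.exp (∑ k ∈ Finset.range n, A k) := by
    intro n
    induction n with
    | zero => simp
    | succ n ih =>
      have h1 : Z (n+1) ≤ Z n * (1 + A n) + B n := by
        have := hrec n
        nlinarith [hZ n, hD0 n]
      have hexp1 : (1:ℝ) ≤ Real.exp (∑ k ∈ Finset.range (n+1), A k) :=
        Real.one_le_exp (Finset.sum_nonneg fun i _ => hA i)
      have h1A : (1 + A n) ≤ Real.exp (A n) := by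
        linarith [Real.add_one_le_exp (A n)]
      have h2 : Z n * (1 + A n) ≤ (Z 0 + ∑ k ∈ Finset.range n, B k) *
          Real.exp (∑ k ∈ Finset.range (n+1), A k) := by
        rw [Finset.sum_range_succ A n, Real.exp_add]
        calc Z n * (1 + A n) ≤ ((Z 0 + ∑ k ∈ Finset.range n, B k) *
              Real.exp (∑ k ∈ Finset.range n, A k)) * (1 + A n) :=
              mul_le_mul_of_nonneg_right ih (by linarith [hA n])
          _ ≤ ((Z 0 + ∑ k ∈ Finset.range n, B k) *
              Real.exp (∑ k ∈ Finset.range n, A k)) * Real.exp (A n) := by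
              apply mul_le_mul_of_nonneg_left h1A
              have hb : (0:ℝ) ≤ Z 0 + ∑ k ∈ Finset.range n, B k := by
                have := Finset.sum_nonneg (fun i (_ : i ∈ Finset.range n) => hB i)
                linarith [hZ 0]
              exact mul_nonneg hb (Real.exp_pos _).le
          _ = (Z 0 + ∑ k ∈ Finset.range n, B k) *
              (Real.exp (∑ k ∈ Finset.range n, A k) * Real.exp (A n)) := by ring
      have h3 : B n ≤ B n * Real.exp (∑ k ∈ Finset.range (n+1), A k) :=
        le_mul_of_one_le_right (hB n) hexp1
      calc Z (n+1) ≤ Z n * (1 + A n) + B n := h1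
        _ ≤ (Z 0 + ∑ k ∈ Finset.range n, B k) *
              Real.exp (∑ k ∈ Finset.range (n+1), A k) +
            B n * Real.exp (∑ k ∈ Finset.range (n+1), A k) := add_le_add h2 h3
        _ = (Z 0 + ∑ k ∈ Finset.range (n+1), B k) *
              Real.exp (∑ k ∈ Finset.range (n+1), A k) := by
            rw [Finset.sum_range_succ B n]; ring
  have hMbd : ∀ n, Z n ≤ M := by
    intro n
    refine (hkey n).trans ?_
    rw [hMdef]
    apply mul_le_mul (by linarith [hpartB n]) (Real.exp_le_exp.2 (hpartA n))
      (Real.exp_pos _).le (by linarith [hZ 0])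
  -- G: summable dominating increments
  set G := fun k => M * A k + B k with hGdef
  have hG0 : ∀ k, 0 ≤ G k := fun k => add_nonneg (mul_nonneg hM0 (hA k)) (hB k)
  have hGsum : Summable G := (hAsum.mul_left M).add hBsum
  have hGstep : ∀ k, Z (k+1) ≤ Z k + G k := by
    intro k
    have hr := hrec k
    have h1 : Z k * A k ≤ M * A k := mul_le_mul_of_nonneg_right (hMbd k) (hA k)
    have h2 : 0 ≤ Z k * D k := mul_nonneg (hZ k) (hD0 k)
    simp only [hGdef]
    nlinarith
  -- Telescoping lemma
  have htel : ∀ m n : ℕ, m ≤ n → Z n ≤ Z m + ∑ k ∈ Finset.Ico m n, G k := by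
    intro m n hmn
    induction n, hmn using Nat.le_induction with
    | base => simp
    | succ n hmn ih =>
      rw [Finset.sum_Ico_succ_top hmn]
      calc Z (n+1) ≤ Z n + G n := hGstep n
        _ ≤ Z m + ∑ k ∈ Finset.Ico m n, G k + G n := by linarith
        _ = Z m + (∑ k ∈ Finset.Ico m n, G k + G n) := by ring
  -- Step 2: Z drops below ε infinitely often
  have hdrop : ∀ ε : ℝ, 0 < ε → ∀ N : ℕ, ∃ m, N ≤ m ∧ Z m < ε := by
    intro ε hε N
    by_contra h
    push_neg at h
    have hbig : ∀ m, N ≤ m → ε ≤ Z m := fun m hm => h m hm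
    have htel2 : ∀ n, N ≤ n → Z n ≤ Z N + ∑ k ∈ Finset.Ico N n, G k
        - ε * ∑ k ∈ Finset.Ico N n, D k := by
      intro n hn
      induction n, hn using Nat.le_induction with
      | base => simp
      | succ n hn ih =>
        have hstep : Z (n+1) ≤ Z n + G n - ε * D n := by
          have hr := hrec n
          have h1 : Z n * A n ≤ M * A n := mul_le_mul_of_nonneg_right (hMbd n) (hA n)
          have h2 : ε * D n ≤ Z n * D n :=
            mul_le_mul_of_nonneg_right (hbig n hn) (hD0 n)
          simp only [hGdef]
          nlinarith
        rw [Finset.sum_Ico_succ_top hn, Finset.sum_Ico_succ_top hn]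
        calc Z (n+1) ≤ Z n + G n - ε * D n := hstep
          _ ≤ Z N + ∑ k ∈ Finset.Ico N n, G k - ε * ∑ k ∈ Finset.Ico N n, D k
              + G n - ε * D n := by linarith
          _ = Z N + (∑ k ∈ Finset.Ico N n, G k + G n)
              - ε * (∑ k ∈ Finset.Ico N n, D k + D n) := by ring
    set GS := ∑' k, G k with hGSdef
    have hGbd : ∀ n, ∑ k ∈ Finset.Ico N n, G k ≤ GS :=
      fun n => Summable.sum_le_tsum _ (fun i _ => hG0 i) hGsum
    -- choose n with ε * ∑ D large
    have hev : ∀ᶠ n in atTop, (Z N + GS) / ε + 1 + ∑ k ∈ Finset.range N, D k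
        ≤ ∑ k ∈ Finset.range n, D k :=
      hDsum.eventually_ge_atTop _
    obtain ⟨n, hn, hnN⟩ := (hev.and (eventually_ge_atTop N)).exists
    have hsplit : ∑ k ∈ Finset.Ico N n, D k
        = ∑ k ∈ Finset.range n, D k - ∑ k ∈ Finset.range N, D k := by
      rw [Finset.range_eq_Ico,
        ← Finset.sum_Ico_consecutive _ (Nat.zero_le N) hnN]
      rw [← Finset.range_eq_Ico]; ring
    have hDlarge : (Z N + GS) / ε + 1 ≤ ∑ k ∈ Finset.Ico N n, D k := by
      rw [hsplit]; linarith
    have hfinal := htel2 n hnN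
    have hZn := hZ n
    have hεD : ε * ((Z N + GS) / ε + 1) ≤ ε * ∑ k ∈ Finset.Ico N n, D k :=
      mul_le_mul_of_nonneg_left hDlarge hε.le
    have hεne : ε ≠ 0 := hε.ne'
    have hexp : ε * ((Z N + GS) / ε + 1) = Z N + GS + ε := by field_simp
    have := hGbd n
    linarith
  -- Step 3: tail sums of G tend to 0
  have htail : Tendsto (fun m => ∑' k, G (k + m)) atTop (nhds 0) :=
    tendsto_sum_nat_add G
  have hIcotail : ∀ m n : ℕ, m ≤ n → ∑ k ∈ Finset.Ico m n, G k ≤ ∑' k, G (k + m) := by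
    intro m n hmn
    rw [Finset.sum_Ico_eq_sum_range]
    have heq : ∑ k ∈ Finset.range (n - m), G (m + k)
        = ∑ k ∈ Finset.range (n - m), G (k + m) :=
      Finset.sum_congr rfl fun i _ => by rw [add_comm]
    rw [heq]
    exact Summable.sum_le_tsum _ (fun i _ => hG0 _) ((summable_nat_add_iff m).2 hGsum)
  -- Assemble
  rw [Metric.tendsto_atTop]
  intro ε hε
  have hε2 : 0 < ε / 2 := by linarith
  obtain ⟨N₀, hN₀⟩ := eventually_atTop.1 (htail.eventually (gt_mem_nhds hε2))
  obtain ⟨m, hmN₀, hZm⟩ := hdrop (ε/2) hε2 N₀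
  refine ⟨m, fun n hn => ?_⟩
  have h1 := htel m n hn
  have h2 := hIcotail m n hn
  have h3 := hN₀ m hmN₀
  rw [Real.dist_eq, sub_zero, abs_of_nonneg (hZ n)]
  linarith
end
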